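/- Let X : Ω → ℝ^m and V : Ω → ℝ^t be jointly centered Gaussian with block covariance Σ = [[Σ_xx, Σ_xv],[Σ_xvᵀ, Σ_vv]], Σ_vv positive definite, and let S ⊆ ℝ^t be measurable with P(V ∈ S) > 0. Then the conditional expectation of X given the event {V ∈ S} satisfies E[X | V ∈ S] = Σ_xv Σ_vv⁻¹ E[V | V ∈ S], where E[· | V ∈ S] denotes the expectation under the conditioned measure P(· | V ∈ S). -/

import Mathlib

open MeasureTheory ProbabilityTheory Matrix
open scoped ProbabilityTheory

/-- The standard Gaussian measure on `ℝ^n`. -/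
noncomputable def stdGaussianPi (n : ℕ) : Measure (Fin n → ℝ) :=
  Measure.pi fun _ => gaussianReal 0 1

open scoped Classical in
/-- The multivariate Gaussian measure `N(μ, S)` on `ℝ^n`, defined as the pushforward of the
standard Gaussian under `x ↦ μ + √S x` when `S` is positive semidefinite. -/
noncomputable def multivariateGaussian {n : ℕ} (μ : Fin n → ℝ)
    (S : Matrix (Fin n) (Fin n) ℝ) : Measure (Fin n → ℝ) :=
  if hS : S.PosSemidef then (stdGaussianPi n).map (fun x => μ +
    ((hS.1.eigenvectorUnitary : Matrix (Fin n) (Fin n) ℝ) *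
      diagonal (fun i => Real.sqrt (hS.1.eigenvalues i)) *
      (star hS.1.eigenvectorUnitary : Matrix (Fin n) (Fin n) ℝ)).mulVec x) else 0

/-- The block matrix `[[Sxx, Sxv], [Sxvᵀ, Svv]]` as a matrix on `Fin (m + t)`. -/
noncomputable def blockCov {m t : ℕ} (Sxx : Matrix (Fin m) (Fin m) ℝ)
    (Sxv : Matrix (Fin m) (Fin t) ℝ) (Svv : Matrix (Fin t) (Fin t) ℝ) :
    Matrix (Fin (m + t)) (Fin (m + t)) ℝ :=
  Matrix.reindex finSumFinEquiv finSumFinEquiv (Matrix.fromBlocks Sxx Sxv Sxvᵀ Svv)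


open scoped ENNReal RealInnerProductSpace

section Aux

lemma aux_lintegral_pi_prod : ∀ (n : ℕ) {α : Type} [MeasurableSpace α] (μ : Measure α)
    [SigmaFinite μ] (f : Fin n → α → ℝ≥0∞) (_hf : ∀ i, Measurable (f i)),
    ∫⁻ x, ∏ i, f i (x i) ∂(Measure.pi fun _ => μ) = ∏ i, ∫⁻ a, f i a ∂μ := by
  intro n
  induction n with
  | zero =>
    intro α _ μ _ f hf
    rw [Measure.pi_of_empty]
    simp
  | succ n ih =>
    intro α _ μ _ f hf
    have hmp := (measurePreserving_piFinSuccAbove (fun _ : Fin (n+1) => μ) 0).symm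
    rw [← hmp.map_eq, lintegral_map (by
      exact Finset.measurable_prod _ fun i _ => (hf i).comp (measurable_pi_apply i)) hmp.measurable]
    have hpt : ∀ y : α × (Fin n → α),
        (∏ i, f i ((MeasurableEquiv.piFinSuccAbove (fun _ => α) 0).symm y i)) =
          f 0 y.1 * ∏ j, f j.succ (y.2 j) := by
      intro y
      have h0 : ((MeasurableEquiv.piFinSuccAbove (fun _ => α) 0).symm y) 0 = y.1 := by
        simp [MeasurableEquiv.piFinSuccAbove]
      have hsucc : ∀ j : Fin n,
          ((MeasurableEquiv.piFinSuccAbove (fun _ => α) 0).symm y) j.succ = y.2 j := by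
        intro j
        have h := Fin.insertNth_apply_succAbove (α := fun _ : Fin (n+1) => α) 0 y.1 y.2 j
        simpa [MeasurableEquiv.piFinSuccAbove, Fin.succAbove_zero] using h
      rw [Fin.prod_univ_succ, h0]
      exact congrArg _ (Finset.prod_congr rfl fun j _ => by rw [hsucc])
    simp_rw [hpt]
    have hmul := lintegral_prod_mul (μ := μ) (ν := Measure.pi fun _ : Fin n => μ)
      (f := f 0) (g := fun y => ∏ j, f j.succ (y j)) (hf 0).aemeasurable
      (Finset.measurable_prod _ fun j _ => (hf j.succ).comp (measurable_pi_apply j)).aemeasurable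
    rw [hmul, ih μ (fun j => f j.succ) (fun j => hf j.succ), Fin.prod_univ_succ]

lemma aux_stdGaussianPi_eq (n : ℕ) :
    stdGaussianPi n = (volume : Measure (Fin n → ℝ)).withDensity
      (fun z => ∏ i, gaussianPDF 0 1 (z i)) := by
  refine Measure.pi_eq fun s hs => ?_
  rw [withDensity_apply _ (MeasurableSet.univ_pi hs), ← lintegral_indicator (MeasurableSet.univ_pi hs)]
  have hpt : (Set.univ.pi s).indicator (fun z => ∏ i, gaussianPDF 0 1 (z i)) =
      fun z => ∏ i, (s i).indicator (gaussianPDF 0 1) (z i) := by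
    funext z
    by_cases hz : z ∈ Set.univ.pi s
    · rw [Set.indicator_of_mem hz]
      exact Finset.prod_congr rfl fun i _ =>
        (Set.indicator_of_mem (hz i (Set.mem_univ i)) _).symm
    · rw [Set.indicator_of_notMem hz]
      have hex : ∃ i, z i ∉ s i := by simpa [Set.mem_pi] using hz
      obtain ⟨i, hi⟩ := hex
      exact (Finset.prod_eq_zero (Finset.mem_univ i) (by rw [Set.indicator_of_notMem hi])).symm
  rw [hpt, MeasureTheory.volume_pi,
    aux_lintegral_pi_prod n volume _ (fun i => (measurable_gaussianPDF 0 1).indicator (hs i))]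
  exact Finset.prod_congr rfl fun i _ => by
    rw [lintegral_indicator (hs i), gaussianReal_apply 0 one_ne_zero (s i)]

lemma aux_map_withDensity {α β : Type*} [MeasurableSpace α] [MeasurableSpace β]
    (em : α ≃ᵐ β) (μ : Measure α) (f : β → ℝ≥0∞) (hf : Measurable f) :
    (μ.withDensity (fun a => f (em a))).map em = (μ.map em).withDensity f := by
  ext s hs
  rw [Measure.map_apply em.measurable hs, withDensity_apply _ (em.measurable hs),
    withDensity_apply _ hs, setLIntegral_map hs hf em.measurable]

/-- The std Gaussian transported to Euclidean space. -/
noncomputable def stdGaussianE (n : ℕ) : Measure (EuclideanSpace ℝ (Fin n)) :=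
  (stdGaussianPi n).map ((MeasurableEquiv.toLp 2 (Fin n → ℝ)).symm).symm

lemma aux_stdGaussianE_eq (n : ℕ) :
    stdGaussianE n = (volume : Measure (EuclideanSpace ℝ (Fin n))).withDensity
      (fun x => ENNReal.ofReal ((Real.sqrt (2 * Real.pi))⁻¹ ^ n * Real.exp (-‖x‖ ^ 2 / 2))) := by
  have hG : ∀ x : EuclideanSpace ℝ (Fin n),
      (∏ i, gaussianPDF 0 1 (x i)) =
        ENNReal.ofReal ((Real.sqrt (2 * Real.pi))⁻¹ ^ n * Real.exp (-‖x‖ ^ 2 / 2)) := by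
    intro x
    have h1 : ∀ i : Fin n, gaussianPDF 0 1 (x i) = ENNReal.ofReal (gaussianPDFReal 0 1 (x i)) := fun i => rfl
    simp_rw [h1, ← ENNReal.ofReal_prod_of_nonneg (fun i _ => gaussianPDFReal_nonneg 0 1 (x i))]
    congr 1
    have h2 : ∀ i : Fin n, gaussianPDFReal 0 1 (x i)
        = (Real.sqrt (2 * Real.pi))⁻¹ * Real.exp (-(x i) ^ 2 / 2) := by
      intro i
      simp [gaussianPDFReal, one_div]
    rw [Finset.prod_congr rfl fun i _ => h2 i, Finset.prod_mul_distrib, Finset.prod_const,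
      ← Real.exp_sum]
    congr 2
    · simp
    rw [← Finset.sum_div]
    have hn : ‖x‖ ^ 2 = ∑ i, (x i) ^ 2 := by
      rw [EuclideanSpace.norm_eq]
      rw [Real.sq_sqrt (Finset.sum_nonneg fun i _ => sq_nonneg _)]
      simp [Real.norm_eq_abs, sq_abs]
    rw [Finset.sum_neg_distrib, hn]
  have hGmeas : Measurable fun x : EuclideanSpace ℝ (Fin n) =>
      ENNReal.ofReal ((Real.sqrt (2 * Real.pi))⁻¹ ^ n * Real.exp (-‖x‖ ^ 2 / 2)) := by
    fun_prop
  rw [stdGaussianE, aux_stdGaussianPi_eq]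
  have := aux_map_withDensity ((MeasurableEquiv.toLp 2 (Fin n → ℝ)).symm).symm
    (volume : Measure (Fin n → ℝ))
    (fun x => ENNReal.ofReal ((Real.sqrt (2 * Real.pi))⁻¹ ^ n * Real.exp (-‖x‖ ^ 2 / 2))) hGmeas
  have hvp : Measure.map (⇑((MeasurableEquiv.toLp 2 (Fin n → ℝ)).symm).symm)
      (volume : Measure (Fin n → ℝ)) = volume :=
    (MeasurePreserving.symm _ (EuclideanSpace.volume_preserving_symm_measurableEquiv_toLp (Fin n))).map_eq
  rw [hvp] at this
  rw [← this]
  refine congrArg _ (congrArg _ (funext fun z => ?_))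
  exact (hG (((MeasurableEquiv.toLp 2 (Fin n → ℝ)).symm).symm z))


lemma aux_stdGaussianE_map_isometry (n : ℕ)
    (e : EuclideanSpace ℝ (Fin n) ≃ₗᵢ[ℝ] EuclideanSpace ℝ (Fin n)) :
    (stdGaussianE n).map e = stdGaussianE n := by
  set G : EuclideanSpace ℝ (Fin n) → ℝ≥0∞ :=
    fun x => ENNReal.ofReal ((Real.sqrt (2 * Real.pi))⁻¹ ^ n * Real.exp (-‖x‖ ^ 2 / 2)) with hGdef
  have hGmeas : Measurable G := by fun_prop
  have hGe : ∀ x, G (e x) = G x := by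
    intro x; simp [hGdef, e.norm_map]
  set em : EuclideanSpace ℝ (Fin n) ≃ᵐ EuclideanSpace ℝ (Fin n) :=
    e.toHomeomorph.toMeasurableEquiv with hemdef
  have hem : (⇑em : _ → _) = ⇑e := rfl
  have h1 := aux_map_withDensity em volume G hGmeas
  have h2 : (Measure.map (⇑em) (volume : Measure (EuclideanSpace ℝ (Fin n)))) = volume := by
    rw [hem]; exact e.measurePreserving.map_eq
  rw [h2] at h1
  have h3 : (fun a => G (em a)) = G := by funext a; rw [hem]; exact hGe a
  rw [h3] at h1
  rw [aux_stdGaussianE_eq, ← hem, h1]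

lemma aux_reflection_key {n k : ℕ} (c : EuclideanSpace ℝ (Fin n))
    (q : Fin k → EuclideanSpace ℝ (Fin n))
    (horth : ∀ j, ⟪c, q j⟫ = 0) (S : Set (Fin k → ℝ)) (hS : MeasurableSet S) :
    ∫ z, ({z : EuclideanSpace ℝ (Fin n) | (fun j => ⟪q j, z⟫) ∈ S}).indicator
      (fun z => ⟪c, z⟫) z ∂(stdGaussianE n) = 0 := by
  by_cases hc : c = 0
  · simp [hc]
  set K : Submodule ℝ (EuclideanSpace ℝ (Fin n)) := (ℝ ∙ c)ᗮ with hK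
  set e := K.reflection with he
  -- c pairs to zero with everything in K
  have hcK : ∀ u, u ∈ K → ⟪c, u⟫ = 0 := by
    intro u hu
    exact hu c (Submodule.mem_span_singleton_self c)
  have h1 : ∀ z, ⟪c, e z⟫ = -⟪c, z⟫ := by
    intro z
    rw [he, Submodule.reflection_apply, inner_sub_right, two_smul]
    rw [inner_add_right]
    rw [hcK _ (K.starProjection_apply_mem z)]
    ring
  have h2 : ∀ j z, ⟪q j, e z⟫ = ⟪q j, z⟫ := by
    intro j z
    have hqK : q j ∈ K := by
      rw [hK]
      exact Submodule.mem_orthogonal_singleton_iff_inner_right.mpr (horth j)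
    have hz : ⟪q j, z - K.starProjection z⟫ = 0 :=
      Submodule.inner_right_of_mem_orthogonal hqK (K.sub_starProjection_mem_orthogonal z)
    rw [inner_sub_right] at hz
    rw [he, Submodule.reflection_apply, inner_sub_right, two_smul, inner_add_right]
    have : ⟪q j, K.starProjection z⟫ = ⟪q j, z⟫ := by linarith
    rw [this]; ring
  set f : EuclideanSpace ℝ (Fin n) → ℝ :=
    ({z : EuclideanSpace ℝ (Fin n) | (fun j => ⟪q j, z⟫) ∈ S}).indicator (fun z => ⟪c, z⟫) with hf
  have hsetmeas : MeasurableSet {z : EuclideanSpace ℝ (Fin n) | (fun j => ⟪q j, z⟫) ∈ S} := by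
    have : Measurable fun z : EuclideanSpace ℝ (Fin n) => (fun j => ⟪q j, z⟫) := by
      rw [measurable_pi_iff]
      intro j
      exact (continuous_const.inner continuous_id).measurable
    exact this hS
  have hfmeas : Measurable f := by
    apply Measurable.indicator _ hsetmeas
    exact (continuous_const.inner continuous_id).measurable
  have hfe : ∀ z, f (e z) = -f z := by
    intro z
    have hmem : (fun j => ⟪q j, e z⟫) = (fun j => ⟪q j, z⟫) := funext fun j => h2 j z
    have hmemiff : (e z ∈ {z : EuclideanSpace ℝ (Fin n) | (fun j => ⟪q j, z⟫) ∈ S}) =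
        (z ∈ {z : EuclideanSpace ℝ (Fin n) | (fun j => ⟪q j, z⟫) ∈ S}) := by
      simp only [Set.mem_setOf_eq, hmem]
    by_cases hz : z ∈ {z : EuclideanSpace ℝ (Fin n) | (fun j => ⟪q j, z⟫) ∈ S}
    · rw [hf, Set.indicator_of_mem (hmemiff ▸ hz), Set.indicator_of_mem hz]
      exact h1 z
    · rw [hf, Set.indicator_of_notMem (fun h => hz (hmemiff ▸ h)),
        Set.indicator_of_notMem hz, neg_zero]
  have hinv := aux_stdGaussianE_map_isometry n e
  have hcoe : (⇑e : _ → _) = ⇑(e.toHomeomorph.toMeasurableEquiv) := rfl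
  have hmap : ∫ z, f z ∂(stdGaussianE n) = ∫ z, f (e z) ∂(stdGaussianE n) := by
    conv_lhs => rw [← hinv]
    rw [hcoe]
    exact integral_map (e.toHomeomorph.toMeasurableEquiv.measurable.aemeasurable)
      (by rw [← hcoe, hinv]; exact hfmeas.aestronglyMeasurable)
  have : ∫ z, f (e z) ∂(stdGaussianE n) = -∫ z, f z ∂(stdGaussianE n) := by
    simp_rw [hfe]
    exact integral_neg f
  linarith [hmap, this]


lemma aux_key {n k : ℕ} (c : Fin n → ℝ) (q : Fin k → Fin n → ℝ)
    (horth : ∀ j, ∑ l, c l * q j l = 0) (S : Set (Fin k → ℝ)) (hS : MeasurableSet S) :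
    ∫ z, ({z : Fin n → ℝ | (fun j => ∑ l, q j l * z l) ∈ S}).indicator
      (fun z => ∑ l, c l * z l) z ∂(stdGaussianPi n) = 0 := by
  set φ := (MeasurableEquiv.toLp 2 (Fin n → ℝ)).symm with hφ
  set cE : EuclideanSpace ℝ (Fin n) := φ.symm c with hcE
  set qE : Fin k → EuclideanSpace ℝ (Fin n) := fun j => φ.symm (q j) with hqE
  have hinner : ∀ (v : Fin n → ℝ) (x : EuclideanSpace ℝ (Fin n)),
      ⟪φ.symm v, x⟫ = ∑ l, v l * (φ x) l := by
    intro v x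
    simp only [PiLp.inner_apply, RCLike.inner_apply, conj_trivial]
    exact Finset.sum_congr rfl fun l _ => mul_comm _ _
  have hμ : stdGaussianPi n = (stdGaussianE n).map φ := by
    rw [stdGaussianE, Measure.map_map φ.measurable φ.symm.measurable,
      MeasurableEquiv.self_comp_symm, Measure.map_id]
  have hsetmeas : MeasurableSet {z : Fin n → ℝ | (fun j => ∑ l, q j l * z l) ∈ S} := by
    have : Measurable fun z : Fin n → ℝ => (fun j => ∑ l, q j l * z l) := by
      rw [measurable_pi_iff]; intro j; fun_prop
    exact this hS
  have hfmeas : Measurable (({z : Fin n → ℝ | (fun j => ∑ l, q j l * z l) ∈ S}).indicator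
      (fun z => ∑ l, c l * z l)) := by
    apply Measurable.indicator _ hsetmeas
    fun_prop
  rw [hμ, integral_map φ.measurable.aemeasurable (by rw [← hμ]; exact hfmeas.aestronglyMeasurable)]
  have hpt : ∀ x : EuclideanSpace ℝ (Fin n),
      ({z : Fin n → ℝ | (fun j => ∑ l, q j l * z l) ∈ S}).indicator
        (fun z => ∑ l, c l * z l) (φ x)
      = ({x : EuclideanSpace ℝ (Fin n) | (fun j => ⟪qE j, x⟫) ∈ S}).indicator
        (fun x => ⟪cE, x⟫) x := by
    intro x
    have hmem : (φ x ∈ {z : Fin n → ℝ | (fun j => ∑ l, q j l * z l) ∈ S}) =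
        (x ∈ {x : EuclideanSpace ℝ (Fin n) | (fun j => ⟪qE j, x⟫) ∈ S}) := by
      simp only [Set.mem_setOf_eq, hqE, hinner]
    have hval : (∑ l, c l * (φ x) l) = ⟪cE, x⟫ := by rw [hcE, hinner]
    by_cases hx : x ∈ {x : EuclideanSpace ℝ (Fin n) | (fun j => ⟪qE j, x⟫) ∈ S}
    · rw [Set.indicator_of_mem (hmem ▸ hx), Set.indicator_of_mem hx, hval]
    · rw [Set.indicator_of_notMem (fun h => hx (hmem ▸ h)), Set.indicator_of_notMem hx]
  simp_rw [hpt]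
  refine aux_reflection_key cE qE (fun j => ?_) S hS
  rw [hcE, hinner]
  exact horth j


instance (n : ℕ) : IsProbabilityMeasure (stdGaussianPi n) := by
  rw [stdGaussianPi]; infer_instance

lemma aux_map_eval (n : ℕ) (l : Fin n) :
    (stdGaussianPi n).map (fun z => z l) = gaussianReal 0 1 := by
  ext s hs
  rw [Measure.map_apply (measurable_pi_apply l) hs]
  have hpre : (fun z : Fin n → ℝ => z l) ⁻¹' s =
      Set.univ.pi (Function.update (fun _ : Fin n => (Set.univ : Set ℝ)) l s) := by
    ext z
    simp only [Set.mem_preimage, Set.mem_pi, Set.mem_univ, forall_true_left]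
    constructor
    · intro hz i
      by_cases hi : i = l
      · subst hi; rwa [Function.update_self]
      · rw [Function.update_of_ne hi]; trivial
    · intro hz
      have := hz l; rwa [Function.update_self] at this
  rw [hpre, stdGaussianPi, Measure.pi_pi]
  rw [Finset.prod_eq_single l (fun i _ hi => by rw [Function.update_of_ne hi]; simp)
    (fun h => absurd (Finset.mem_univ l) h)]
  rw [Function.update_self]

lemma aux_integrable_id_gaussian : Integrable (fun x : ℝ => x) (gaussianReal 0 1) := by
  rw [gaussianReal_of_var_ne_zero 0 one_ne_zero]
  rw [integrable_withDensity_iff (measurable_gaussianPDF 0 1)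
    (ae_of_all _ fun x => ENNReal.ofReal_lt_top)]
  have hpdf : ∀ x : ℝ, (gaussianPDF 0 1 x).toReal = gaussianPDFReal 0 1 x := fun x =>
    ENNReal.toReal_ofReal (gaussianPDFReal_nonneg 0 1 x)
  simp_rw [hpdf]
  have hbase : Integrable (fun x : ℝ => x ^ (1 : ℝ) * Real.exp (-(2⁻¹ : ℝ) * x ^ 2)) := by
    exact integrable_rpow_mul_exp_neg_mul_sq (by norm_num) (by norm_num)
  simp_rw [Real.rpow_one] at hbase
  have := hbase.const_mul (Real.sqrt (2 * Real.pi))⁻¹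
  refine this.congr (ae_of_all _ fun x => ?_)
  simp only [gaussianPDFReal, NNReal.coe_one, mul_one, sub_zero, one_div]
  ring_nf
lemma aux_integrable_coord (n : ℕ) (l : Fin n) :
    Integrable (fun z : Fin n → ℝ => z l) (stdGaussianPi n) := by
  have h := aux_map_eval n l
  have := (integrable_map_measure (f := fun z : Fin n → ℝ => z l) (g := fun x : ℝ => x)
    (by rw [h]; exact measurable_id.aestronglyMeasurable)
    (measurable_pi_apply l).aemeasurable).mp (by rw [h]; exact aux_integrable_id_gaussian)
  exact this

lemma aux_integrable_pi {κ Ω' : Type*} [Fintype κ] [MeasurableSpace Ω'] {μ : Measure Ω'}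
    {f : Ω' → κ → ℝ} (hm : Measurable f) (h : ∀ i, Integrable (fun x => f x i) μ) :
    Integrable f μ := by
  have hg : Integrable (fun x => ∑ i, ‖f x i‖) μ :=
    integrable_finset_sum _ fun i _ => (h i).norm
  refine hg.mono' hm.aestronglyMeasurable (ae_of_all _ fun x => ?_)
  rw [pi_norm_le_iff_of_nonneg (Finset.sum_nonneg fun i _ => norm_nonneg _)]
  exact fun i => Finset.single_le_sum (fun i _ => norm_nonneg (f x i)) (Finset.mem_univ i)

lemma aux_integral_apply {κ Ω' : Type*} [Fintype κ] [MeasurableSpace Ω'] {μ : Measure Ω'}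
    {f : Ω' → κ → ℝ} (hf : Integrable f μ) (i : κ) :
    (∫ x, f x ∂μ) i = ∫ x, f x i ∂μ :=
  ((ContinuousLinearMap.proj (R := ℝ) (φ := fun _ : κ => ℝ) i).integral_comp_comm hf).symm

lemma aux_sqrtMat_mul_self {n : ℕ} {B : Matrix (Fin n) (Fin n) ℝ} (hB : B.PosSemidef) :
    ((hB.1.eigenvectorUnitary : Matrix (Fin n) (Fin n) ℝ) *
      diagonal (fun i => Real.sqrt (hB.1.eigenvalues i)) *
      (star hB.1.eigenvectorUnitary : Matrix (Fin n) (Fin n) ℝ)) *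
    ((hB.1.eigenvectorUnitary : Matrix (Fin n) (Fin n) ℝ) *
      diagonal (fun i => Real.sqrt (hB.1.eigenvalues i)) *
      (star hB.1.eigenvectorUnitary : Matrix (Fin n) (Fin n) ℝ)) = B := by
  have hUU : (star hB.1.eigenvectorUnitary : Matrix (Fin n) (Fin n) ℝ) *
      (hB.1.eigenvectorUnitary : Matrix (Fin n) (Fin n) ℝ) = 1 := Unitary.coe_star_mul_self _
  have hD : diagonal (fun i => Real.sqrt (hB.1.eigenvalues i)) *
      diagonal (fun i => Real.sqrt (hB.1.eigenvalues i)) =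
      diagonal (RCLike.ofReal ∘ hB.1.eigenvalues) := by
    rw [diagonal_mul_diagonal]; congr 1; funext i
    simp [Real.mul_self_sqrt (hB.eigenvalues_nonneg i)]
  conv_rhs => rw [hB.1.spectral_theorem, Unitary.conjStarAlgAut_apply]
  calc _ = (hB.1.eigenvectorUnitary : Matrix (Fin n) (Fin n) ℝ) *
        (diagonal (fun i => Real.sqrt (hB.1.eigenvalues i)) *
        ((star hB.1.eigenvectorUnitary : Matrix (Fin n) (Fin n) ℝ) *
        (hB.1.eigenvectorUnitary : Matrix (Fin n) (Fin n) ℝ)) *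
        diagonal (fun i => Real.sqrt (hB.1.eigenvalues i))) *
        (star hB.1.eigenvectorUnitary : Matrix (Fin n) (Fin n) ℝ) := by
        simp only [Matrix.mul_assoc]
    _ = _ := by rw [hUU, Matrix.mul_one, hD]

lemma aux_sqrtMat_herm {n : ℕ} {B : Matrix (Fin n) (Fin n) ℝ} (hB : B.PosSemidef) :
    ((hB.1.eigenvectorUnitary : Matrix (Fin n) (Fin n) ℝ) *
      diagonal (fun i => Real.sqrt (hB.1.eigenvalues i)) *
      (star hB.1.eigenvectorUnitary : Matrix (Fin n) (Fin n) ℝ)).IsHermitian := by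
  simp [Matrix.IsHermitian, Matrix.mul_assoc, Matrix.star_eq_conjTranspose]

end Aux

/-- Mean identity: `E[X | V ∈ S] = Sxv Svv⁻¹ E[V | V ∈ S]`. -/
theorem cond_mean_eq {Ω : Type*} [MeasurableSpace Ω] {m t : ℕ}
    (P : Measure Ω) [IsProbabilityMeasure P]
    (X : Ω → (Fin m → ℝ)) (V : Ω → (Fin t → ℝ))
    (hX : Measurable X) (hV : Measurable V)
    (Sxx : Matrix (Fin m) (Fin m) ℝ) (Sxv : Matrix (Fin m) (Fin t) ℝ)
    (Svv : Matrix (Fin t) (Fin t) ℝ) (hvv : Svv.PosDef)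
    (hjoint : P.map (fun ω => Fin.append (X ω) (V ω)) =
      _root_.multivariateGaussian 0 (blockCov Sxx Sxv Svv))
    (S : Set (Fin t → ℝ)) (hS : MeasurableSet S) (hpos : 0 < P (V ⁻¹' S)) :
    (∫ ω, X ω ∂(P[|V ⁻¹' S])) = (Sxv * Svv⁻¹).mulVec (∫ ω, V ω ∂(P[|V ⁻¹' S])) := by
  set W : Ω → (Fin (m + t) → ℝ) := fun ω => Fin.append (X ω) (V ω) with hWdef
  have hW : Measurable W := by
    rw [measurable_pi_iff]
    intro k
    refine Fin.addCases (fun i => ?_) (fun j => ?_) k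
    · have h1 : (fun ω => W ω (Fin.castAdd t i)) = fun ω => X ω i :=
        funext fun ω => Fin.append_left _ _ i
      rw [h1]; exact (measurable_pi_apply i).comp hX
    · have h1 : (fun ω => W ω (Fin.natAdd m j)) = fun ω => V ω j :=
        funext fun ω => Fin.append_right _ _ j
      rw [h1]; exact (measurable_pi_apply j).comp hV
  have hpsd : (blockCov Sxx Sxv Svv).PosSemidef := by
    by_contra hns
    rw [_root_.multivariateGaussian, dif_neg hns] at hjoint
    have hprob : IsProbabilityMeasure (P.map W) := Measure.isProbabilityMeasure_map hW.aemeasurable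
    rw [hWdef] at hprob
    rw [hjoint] at hprob
    have h0 : (0 : Measure (Fin (m + t) → ℝ)) Set.univ = 0 := rfl
    exact zero_ne_one (h0 ▸ hprob.measure_univ)
  set A : Matrix (Fin (m + t)) (Fin (m + t)) ℝ :=
    (hpsd.1.eigenvectorUnitary : Matrix (Fin (m + t)) (Fin (m + t)) ℝ) *
      diagonal (fun i => Real.sqrt (hpsd.1.eigenvalues i)) *
      (star hpsd.1.eigenvectorUnitary : Matrix (Fin (m + t)) (Fin (m + t)) ℝ) with hA
  have hmap : P.map W = (stdGaussianPi (m + t)).map A.mulVec := by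
    rw [hWdef, hjoint, _root_.multivariateGaussian, dif_pos hpsd]
    congr 1
    funext z
    simp [hA]
  have hmv : Measurable (A.mulVec) := by
    rw [measurable_pi_iff]
    intro k
    simp only [Matrix.mulVec, dotProduct]
    exact Finset.measurable_sum _ fun l _ => (measurable_pi_apply l).const_mul _
  have hBxv : ∀ (i : Fin m) (j : Fin t),
      blockCov Sxx Sxv Svv (Fin.castAdd t i) (Fin.natAdd m j) = Sxv i j := by
    intro i j
    simp [blockCov, Matrix.reindex_apply, finSumFinEquiv_symm_apply_castAdd,
      finSumFinEquiv_symm_apply_natAdd]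
  have hBvv : ∀ (j' j : Fin t),
      blockCov Sxx Sxv Svv (Fin.natAdd m j') (Fin.natAdd m j) = Svv j' j := by
    intro j' j
    simp [blockCov, Matrix.reindex_apply, finSumFinEquiv_symm_apply_natAdd]
  have hAA : ∀ a b, (∑ l, A a l * A b l) = blockCov Sxx Sxv Svv a b := by
    intro a b
    have h1 : (A * A) a b = blockCov Sxx Sxv Svv a b := by rw [hA, aux_sqrtMat_mul_self hpsd]
    rw [← h1, Matrix.mul_apply]
    refine Finset.sum_congr rfl fun l _ => ?_
    have hh : A.IsHermitian := aux_sqrtMat_herm hpsd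
    have h2 := congrFun (congrFun hh l) b
    rw [Matrix.conjTranspose_apply, star_trivial] at h2
    rw [← h2]
  set M := Sxv * Svv⁻¹ with hM
  have hMS : ∀ (i : Fin m) (j : Fin t), ∑ j', M i j' * Svv j' j = Sxv i j := by
    intro i j
    have h1 : M * Svv = Sxv := by
      rw [hM, Matrix.mul_assoc,
        Matrix.nonsing_inv_mul Svv (isUnit_iff_ne_zero.mpr hvv.det_pos.ne'), Matrix.mul_one]
    have := congrFun (congrFun h1 i) j
    rw [Matrix.mul_apply] at this
    exact this
  set s : Set Ω := V ⁻¹' S with hsdef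
  set s' : Set (Fin (m + t) → ℝ) := {w | (fun j => w (Fin.natAdd m j)) ∈ S} with hs'def
  have hs' : MeasurableSet s' := by
    have hmeas : Measurable fun (w : Fin (m + t) → ℝ) => fun j => w (Fin.natAdd m j) :=
      measurable_pi_iff.mpr fun j => measurable_pi_apply _
    exact hmeas hS
  have hpre : s = W ⁻¹' s' := by
    ext ω
    have h1 : (fun j => W ω (Fin.natAdd m j)) = V ω := funext fun j => Fin.append_right _ _ j
    simp only [hsdef, hs'def, Set.mem_preimage, Set.mem_setOf_eq, h1]
  have hint : ∀ k : Fin (m + t), Integrable (fun ω => W ω k) P := by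
    intro k
    have h1 : Integrable (fun w : Fin (m + t) → ℝ => w k) (P.map W) := by
      rw [hmap]
      refine (integrable_map_measure (measurable_pi_apply k).aestronglyMeasurable
        hmv.aemeasurable).mpr ?_
      have h2 : ((fun w : Fin (m + t) → ℝ => w k) ∘ A.mulVec) = fun z => ∑ l, A k l * z l := by
        funext z; simp [Matrix.mulVec, dotProduct]
      rw [h2]
      exact integrable_finset_sum _ fun l _ => (aux_integrable_coord (m + t) l).const_mul _
    exact (integrable_map_measure (measurable_pi_apply k).aestronglyMeasurable
      hW.aemeasurable).mp h1
  have hXW : ∀ i : Fin m, (fun ω => X ω i) = fun ω => W ω (Fin.castAdd t i) :=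
    fun i => funext fun ω => (Fin.append_left _ _ i).symm
  have hVW : ∀ j : Fin t, (fun ω => V ω j) = fun ω => W ω (Fin.natAdd m j) :=
    fun j => funext fun ω => (Fin.append_right _ _ j).symm
  have hXi_int : ∀ i : Fin m, Integrable (fun ω => X ω i) P := fun i => (hXW i) ▸ hint _
  have hVj_int : ∀ j : Fin t, Integrable (fun ω => V ω j) P := fun j => (hVW j) ▸ hint _
  -- the key vanishing integral
  have hstar : ∀ i : Fin m, ∫ ω in s, (X ω i - ∑ j, M i j * V ω j) ∂P = 0 := by
    intro i
    set c : Fin (m + t) → ℝ :=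
      fun l => A (Fin.castAdd t i) l - ∑ j, M i j * A (Fin.natAdd m j) l with hc
    set q : Fin t → Fin (m + t) → ℝ := fun j l => A (Fin.natAdd m j) l with hq
    have horth : ∀ j, ∑ l, c l * q j l = 0 := by
      intro j
      have e1 : ∀ l, c l * q j l = A (Fin.castAdd t i) l * A (Fin.natAdd m j) l
          - ∑ j', M i j' * (A (Fin.natAdd m j') l * A (Fin.natAdd m j) l) := by
        intro l
        rw [hc, hq, sub_mul, Finset.sum_mul]
        simp_rw [mul_assoc]
      rw [Finset.sum_congr rfl fun l _ => e1 l, Finset.sum_sub_distrib]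
      rw [hAA, hBxv]
      rw [Finset.sum_comm]
      have e2 : ∀ j', ∑ l, M i j' * (A (Fin.natAdd m j') l * A (Fin.natAdd m j) l)
          = M i j' * Svv j' j := by
        intro j'
        rw [← Finset.mul_sum, hAA, hBvv]
      rw [Finset.sum_congr rfl fun j' _ => e2 j', hMS]
      ring
    have hfun : (fun ω => X ω i - ∑ j, M i j * V ω j) = fun ω =>
        (fun w : Fin (m + t) → ℝ =>
          w (Fin.castAdd t i) - ∑ j, M i j * w (Fin.natAdd m j)) (W ω) := by
      funext ω
      simp only [hWdef, Fin.append_left, Fin.append_right]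
    have hh : Measurable (fun w : Fin (m + t) → ℝ =>
        w (Fin.castAdd t i) - ∑ j, M i j * w (Fin.natAdd m j)) := by
      apply Measurable.sub (measurable_pi_apply _)
      exact Finset.measurable_sum _ fun j _ => (measurable_pi_apply _).const_mul _
    rw [hfun, hpre,
      ← setIntegral_map hs' hh.aestronglyMeasurable hW.aemeasurable,
      hmap, setIntegral_map hs' hh.aestronglyMeasurable hmv.aemeasurable,
      ← integral_indicator (hmv hs')]
    have hset : A.mulVec ⁻¹' s' =
        {z : Fin (m + t) → ℝ | (fun j => ∑ l, q j l * z l) ∈ S} := by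
      ext z
      simp only [Set.mem_preimage, hs'def, Set.mem_setOf_eq, hq, Matrix.mulVec, dotProduct]
    have hval : (fun z : Fin (m + t) → ℝ =>
        (A.mulVec z) (Fin.castAdd t i) - ∑ j, M i j * (A.mulVec z) (Fin.natAdd m j))
        = fun z => ∑ l, c l * z l := by
      funext z
      simp only [Matrix.mulVec, dotProduct]
      have e3 : ∑ j, M i j * ∑ l, A (Fin.natAdd m j) l * z l
          = ∑ l, (∑ j, M i j * A (Fin.natAdd m j) l) * z l := by
        simp_rw [Finset.mul_sum]
        rw [Finset.sum_comm]
        simp_rw [Finset.sum_mul, mul_assoc]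
      rw [e3, ← Finset.sum_sub_distrib]
      exact Finset.sum_congr rfl fun l _ => by rw [hc, sub_mul]
    have hind : (A.mulVec ⁻¹' s').indicator (fun z =>
        (A.mulVec z) (Fin.castAdd t i) - ∑ j, M i j * (A.mulVec z) (Fin.natAdd m j))
        = ({z : Fin (m + t) → ℝ | (fun j => ∑ l, q j l * z l) ∈ S}).indicator
          (fun z => ∑ l, c l * z l) := by
      rw [hset, hval]
    calc ∫ z, (A.mulVec ⁻¹' s').indicator (fun z =>
          (A.mulVec z) (Fin.castAdd t i) - ∑ j, M i j * (A.mulVec z) (Fin.natAdd m j)) z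
            ∂(stdGaussianPi (m + t))
        = ∫ z, ({z : Fin (m + t) → ℝ | (fun j => ∑ l, q j l * z l) ∈ S}).indicator
            (fun z => ∑ l, c l * z l) z ∂(stdGaussianPi (m + t)) := by rw [hind]
      _ = 0 := aux_key c q horth S hS
  -- componentwise restricted identity
  have hcomp : ∀ i : Fin m, ∫ ω in s, X ω i ∂P = ∑ j, M i j * ∫ ω in s, V ω j ∂P := by
    intro i
    have h1 : Integrable (fun ω => X ω i) (P.restrict s) := (hXi_int i).restrict
    have h2 : Integrable (fun ω => ∑ j, M i j * V ω j) (P.restrict s) :=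
      integrable_finset_sum _ fun j _ => ((hVj_int j).restrict).const_mul _
    have h0 := hstar i
    rw [integral_sub h1 h2, sub_eq_zero] at h0
    rw [h0, integral_finset_sum _ fun j _ => ((hVj_int j).restrict).const_mul _]
    exact Finset.sum_congr rfl fun j _ => integral_const_mul _ _
  have hIntX : Integrable X (P.restrict s) :=
    aux_integrable_pi hX fun i => (hXi_int i).restrict
  have hIntV : Integrable V (P.restrict s) :=
    aux_integrable_pi hV fun j => (hVj_int j).restrict
  have hres : ∫ ω in s, X ω ∂P = M.mulVec (∫ ω in s, V ω ∂P) := by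
    funext i
    rw [aux_integral_apply hIntX i]
    have h3 : M.mulVec (∫ ω in s, V ω ∂P) i = ∑ j, M i j * (∫ ω in s, V ω ∂P) j := by
      simp [Matrix.mulVec, dotProduct]
    rw [h3, hcomp i]
    exact Finset.sum_congr rfl fun j _ => by rw [aux_integral_apply hIntV j]
  rw [ProbabilityTheory.cond, integral_smul_measure, integral_smul_measure, hres,
    Matrix.mulVec_smul]
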